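/- For the k=1 case: define φ(x_0, x_1, x_2) = (x_1, x_2, (x_1 x_2 + a(x_1 + x_2))/x_0) and σ(x_0, x_1, x_2) = (x_2, x_1, x_0). Then σ ∘ φ ∘ σ ∘ φ = id on the open set where all compositions are defined. -/

import Mathlib

/-- The `k = 1` Heideman–Hogan map on triples. -/
def hhPhi3 {F : Type*} [Field F] (a : F) (p : F × F × F) : F × F × F :=
  (p.2.1, p.2.2, (p.2.1 * p.2.2 + a * (p.2.1 + p.2.2)) / p.1)

/-- The reversal involution on triples. -/
def hhSigma3 {F : Type*} [Field F] (p : F × F × F) : F × F × F :=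
  (p.2.2, p.2.1, p.1)

theorem hhPhi3_reversible {F : Type*} [Field F] (a : F) (p : F × F × F)
    (h0 : p.1 ≠ 0) (h1 : p.2.1 ≠ 0) (h2 : p.2.2 ≠ 0)
    (hw : (hhPhi3 a p).2.2 ≠ 0) :
    hhSigma3 (hhPhi3 a (hhSigma3 (hhPhi3 a p))) = p := by
  obtain ⟨x0, x1, x2⟩ := p
  simp only [hhPhi3, hhSigma3] at *
  have hn : x1 * x2 + a * (x1 + x2) ≠ 0 := by
    intro h; apply hw; rw [h, zero_div]
  refine Prod.ext ?_ rfl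
  field_simp
  rw [div_eq_one_iff_eq (by rwa [mul_comm x2 x1])]
  ring
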